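/- Let (X,d) be a metric space, γ a Borel measure on X with 0 < γ(B) < ∞ for every ball B, and m : X → (0,∞) an admissibility function. Let 1 ≤ q < ∞ and let a be a 5-atom: a measurable function on D vanishing outside T(B) for some ball B = B(c,r) with 0 < r ≤ 5·m(c), and satisfying ∬_{T(B)} |a(y,t)|^q dγ(y) dt/t ≤ γ(B)^{1−q}. Then ∫_X A_q^1 a(x) dγ(x) ≤ 1. -/

import Mathlib

open MeasureTheory Metric ENNReal

noncomputable def tMeasure : Measure ℝ :=
  (volume : Measure ℝ).withDensity fun t => ENNReal.ofReal (1 / t)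

noncomputable def planeMeasure {X : Type*} [MeasurableSpace X] (γ : Measure X) :
    Measure (X × ℝ) := γ.prod tMeasure

def admRegion {X : Type*} (m : X → ℝ) : Set (X × ℝ) := {p | 0 < p.2 ∧ p.2 < m p.1}

def tCone {X : Type*} [PseudoMetricSpace X] (m : X → ℝ) (α : ℝ) (x : X) : Set (X × ℝ) :=
  {p | 0 < p.2 ∧ p.2 < m p.1 ∧ dist x p.1 < α * p.2}

def tentSet {X : Type*} [PseudoMetricSpace X] (m : X → ℝ) (O : Set X) : Set (X × ℝ) :=
  {p | 0 < p.2 ∧ p.2 < m p.1 ∧ Metric.ball p.1 p.2 ⊆ O}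

noncomputable def Afun {X : Type*} [PseudoMetricSpace X] [MeasurableSpace X]
    (γ : Measure X) (m : X → ℝ) (q α : ℝ) (f : X × ℝ → ℂ) (x : X) : ℝ≥0∞ :=
  (∫⁻ p in tCone m α x, (‖f p‖₊ : ℝ≥0∞) ^ q / γ (Metric.ball p.1 p.2) ∂(planeMeasure γ)) ^ (1 / q)

noncomputable def tNorm {X : Type*} [PseudoMetricSpace X] [MeasurableSpace X]
    (γ : Measure X) (m : X → ℝ) (p q α : ℝ) (f : X × ℝ → ℂ) : ℝ≥0∞ :=
  (∫⁻ x, Afun γ m q α f x ^ p ∂γ) ^ (1 / p)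

/-- The function `p ↦ γ (ball p.1 p.2)` is lower semicontinuous. -/
lemma lsc_measure_ball {X : Type*} [PseudoMetricSpace X] [MeasurableSpace X] (γ : Measure X) :
    LowerSemicontinuous fun p : X × ℝ => γ (Metric.ball p.1 p.2) := by
  intro p c hc
  have hU : Metric.ball p.1 p.2 = ⋃ n : ℕ, Metric.ball p.1 (p.2 - 1 / (n + 1)) := by
    ext y
    simp only [Metric.mem_ball, Set.mem_iUnion]
    constructor
    · intro h
      have hpos : 0 < p.2 - dist y p.1 := by linarith
      obtain ⟨n, hn⟩ := exists_nat_gt (1 / (p.2 - dist y p.1))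
      refine ⟨n, ?_⟩
      have h1 : 1 / ((n : ℝ) + 1) < p.2 - dist y p.1 := by
        rw [div_lt_iff₀ (by positivity)]
        have : 1 < (p.2 - dist y p.1) * n := by
          rw [div_lt_iff₀ hpos] at hn
          linarith [hn]
        nlinarith [hpos]
      linarith
    · rintro ⟨n, hn⟩
      have : (0:ℝ) < 1 / ((n : ℝ) + 1) := by positivity
      linarith
  have hdir : Directed (fun x1 x2 => x1 ⊆ x2)
      (fun n : ℕ => Metric.ball p.1 (p.2 - 1 / (n + 1))) := by
    apply Monotone.directed_le
    intro i j hij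
    apply Metric.ball_subset_ball
    have : 1 / ((j : ℝ) + 1) ≤ 1 / ((i : ℝ) + 1) := by
      apply one_div_le_one_div_of_le (by positivity)
      have : (i:ℝ) ≤ (j:ℝ) := Nat.cast_le.mpr hij
      linarith
    linarith
  simp only at hc
  rw [hU, hdir.measure_iUnion] at hc
  obtain ⟨n, hn⟩ := lt_iSup_iff.mp hc
  set ε : ℝ := 1 / ((n : ℝ) + 1) with hε
  have hεpos : 0 < ε := by positivity
  have : Metric.ball p (ε / 2) ∈ nhds p := Metric.ball_mem_nhds p (by linarith)
  filter_upwards [this] with q hq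
  have h1 : dist q.1 p.1 < ε / 2 :=
    lt_of_le_of_lt (by rw [Prod.dist_eq]; exact le_max_left _ _) hq
  have h2 : dist q.2 p.2 < ε / 2 :=
    lt_of_le_of_lt (by rw [Prod.dist_eq]; exact le_max_right _ _) hq
  have hsub : Metric.ball p.1 (p.2 - ε) ⊆ Metric.ball q.1 q.2 := by
    intro y hy
    rw [Metric.mem_ball] at hy ⊢
    have habs := abs_lt.mp (by rwa [Real.dist_eq] at h2)
    calc dist y q.1 ≤ dist y p.1 + dist p.1 q.1 := dist_triangle _ _ _
      _ < (p.2 - ε) + ε / 2 := by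
          have := dist_comm p.1 q.1 ▸ h1
          linarith [hy, this]
      _ < q.2 := by linarith [habs.1]
  exact lt_of_lt_of_le hn (measure_mono hsub)

lemma measurable_measure_ball' {X : Type*} [MetricSpace X] [MeasurableSpace X] [BorelSpace X]
    (γ : Measure X) : Measurable fun p : X × ℝ => γ (Metric.ball p.1 p.2) :=
  (lsc_measure_ball γ).measurable


/-- If every ball has positive finite measure, the space is second countable. -/
lemma secondCountable_of_measure_pos_finite {X : Type*} [MetricSpace X] [MeasurableSpace X]
    [OpensMeasurableSpace X] (γ : Measure X)
    (hγ : ∀ (c : X) (r : ℝ), 0 < r → 0 < γ (Metric.ball c r) ∧ γ (Metric.ball c r) < ⊤) :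
    SecondCountableTopology X := by
  rcases isEmpty_or_nonempty X with hX | hX
  · exact Metric.secondCountable_of_almost_dense_set fun ε hε =>
      ⟨∅, Set.countable_empty, fun x => (IsEmpty.false x).elim⟩
  obtain ⟨c⟩ := hX
  apply Metric.secondCountable_of_almost_dense_set
  intro ε hε
  set P : Set (Set X) := {s | ∀ x ∈ s, ∀ y ∈ s, x ≠ y → ε ≤ dist x y} with hP
  have hzorn : ∀ C ⊆ P, IsChain (fun x1 x2 => x1 ⊆ x2) C → C.Nonempty →
      ∃ ub ∈ P, ∀ s ∈ C, s ⊆ ub := by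
    intro C hCP hchain _
    refine ⟨⋃₀ C, ?_, fun s hs => Set.subset_sUnion_of_mem hs⟩
    rintro x ⟨s, hsC, hxs⟩ y ⟨t, htC, hyt⟩ hxy
    rcases hchain.total hsC htC with hst | hts
    · exact hCP htC x (hst hxs) y hyt hxy
    · exact hCP hsC x hxs y (hts hyt) hxy
  have hemp : (∅ : Set X) ∈ P := by intro x hx; exact absurd hx (Set.notMem_empty x)
  obtain ⟨S, -, hSmax⟩ := zorn_subset_nonempty P hzorn ∅ hemp
  have hSsep : S ∈ P := hSmax.prop
  have hcount : S.Countable := by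
    have key : ∀ n : ℕ, (S ∩ Metric.ball c (n+1)).Countable := by
      intro n
      have hdisj : Pairwise (Function.onFun Disjoint
          fun x : ↥(S ∩ Metric.ball c (n+1)) => Metric.ball (x : X) (ε/2)) := by
        intro x y hxy
        apply Metric.ball_disjoint_ball
        have hne : (x : X) ≠ (y : X) := fun h => hxy (Subtype.ext h)
        have := hSsep (x : X) x.2.1 (y : X) y.2.1 hne
        linarith
      have hfin : γ (⋃ x : ↥(S ∩ Metric.ball c (n+1)), Metric.ball (x : X) (ε/2)) ≠ ⊤ := by
        refine (lt_of_le_of_lt (measure_mono ?_) (hγ c ((n+1) + ε) (by positivity)).2).ne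
        intro z hz
        simp only [Set.mem_iUnion] at hz
        obtain ⟨x, hx⟩ := hz
        rw [Metric.mem_ball] at hx ⊢
        have hxc : dist (x : X) c < n + 1 := Metric.mem_ball.mp x.2.2
        calc dist z c ≤ dist z (x : X) + dist (x : X) c := dist_triangle _ _ _
          _ < ε/2 + (n+1) := by linarith
          _ ≤ n + 1 + ε := by linarith
      have hcnt := MeasureTheory.Measure.countable_meas_pos_of_disjoint_of_meas_iUnion_ne_top γ
        (fun _ => measurableSet_ball) hdisj hfin
      have huniv : {x : ↥(S ∩ Metric.ball c (n+1)) |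
          0 < γ (Metric.ball (x : X) (ε/2))} = Set.univ := by
        ext x
        simp [(hγ (x : X) (ε/2) (by positivity)).1]
      rw [huniv, Set.countable_univ_iff] at hcnt
      exact Set.countable_coe_iff.mp hcnt
    have hSU : S = ⋃ n : ℕ, S ∩ Metric.ball c (n+1) := by
      ext x
      simp only [Set.mem_iUnion, Set.mem_inter_iff]
      constructor
      · intro hx
        obtain ⟨n, hn⟩ := exists_nat_gt (dist x c)
        exact ⟨n, hx, Metric.mem_ball.mpr (by push_cast; linarith)⟩
      · rintro ⟨n, hn, -⟩
        exact hn
    rw [hSU]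
    exact Set.countable_iUnion key
  refine ⟨S, hcount, ?_⟩
  intro z
  by_contra hcon
  push_neg at hcon
  have hz : z ∉ S := by
    intro hzS
    have := hcon z hzS
    simp at this
    linarith
  have hins : insert z S ∈ P := by
    rintro x (rfl | hxS) y (rfl | hyS) hxy
    · exact absurd rfl hxy
    · have := hcon y hyS
      linarith
    · have := hcon x hxS
      rw [dist_comm]
      linarith
    · exact hSsep x hxS y hyS hxy
  have : insert z S ⊆ S := hSmax.2 hins (Set.subset_insert z S)
  exact hz (this (Set.mem_insert z S))

/-- The full lintegral is at most the lintegral over any set containing the support. -/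
lemma lintegral_le_setLIntegral_support {α : Type*} [MeasurableSpace α] (μ : Measure α)
    {f : α → ℝ≥0∞} (hf : Measurable f) {s : Set α} (h0 : ∀ p ∉ s, f p = 0) :
    ∫⁻ p, f p ∂μ ≤ ∫⁻ p in s, f p ∂μ := by
  have hT : MeasurableSet (Function.support f) := measurableSet_support hf
  have h1 : ∫⁻ p, f p ∂μ = ∫⁻ p in Function.support f, f p ∂μ := by
    rw [← lintegral_indicator hT]
    congr 1
    exact Set.indicator_support.symm
  rw [h1]
  refine lintegral_mono' (Measure.restrict_mono ?_ le_rfl) le_rfl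
  intro p hp
  by_contra hps
  exact hp (h0 p hps)

/-- Set-lintegrals agree on sets that agree on the support of the function. -/
lemma setLIntegral_congr_support {α : Type*} [MeasurableSpace α] (μ : Measure α)
    {f : α → ℝ≥0∞} (hf : Measurable f) {S S' : Set α}
    (h : S ∩ Function.support f = S' ∩ Function.support f) :
    ∫⁻ p in S, f p ∂μ = ∫⁻ p in S', f p ∂μ := by
  have hT : MeasurableSet (Function.support f) := measurableSet_support hf
  have key : ∀ U : Set α, ∫⁻ p in U, f p ∂μ
      = ∫⁻ p in Function.support f ∩ U, f p ∂μ := by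
    intro U
    rw [← Measure.restrict_restrict hT]
    rw [← lintegral_indicator hT]
    congr 1
    exact Set.indicator_support.symm
  rw [key S, key S', Set.inter_comm _ S, h, Set.inter_comm]

/-- Restricting the product measure to a set inside `B ×ˢ univ` equals restricting the
first factor. -/
lemma prod_restrict_eq_of_subset {X : Type*} [MeasurableSpace X] (γ : Measure X)
    (ν : Measure ℝ) [SFinite ν] {B : Set X} (hB : MeasurableSet B) {s : Set (X × ℝ)}
    (hs : MeasurableSet s) (hsub : s ⊆ B ×ˢ Set.univ) :
    (γ.prod ν).restrict s = ((γ.restrict B).prod ν).restrict s := by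
  ext u hu
  rw [Measure.restrict_apply hu, Measure.restrict_apply hu,
    Measure.prod_apply (hu.inter hs), Measure.prod_apply (hu.inter hs)]
  rw [← lintegral_indicator hB]
  congr 1
  ext x
  by_cases hx : x ∈ B
  · simp [Set.indicator, hx]
  · have hempty : Prod.mk x ⁻¹' (u ∩ s) = ∅ := by
      ext t
      simp only [Set.mem_preimage, Set.mem_inter_iff, Set.mem_empty_iff_false, iff_false,
        not_and]
      intro _ hst
      exact absurd (hsub hst).1 hx
    simp [Set.indicator, hx, hempty]

theorem stmt11 {X : Type*} [MetricSpace X] [MeasurableSpace X] [BorelSpace X]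
    (γ : Measure X)
    (hγ : ∀ (c : X) (r : ℝ), 0 < r → 0 < γ (ball c r) ∧ γ (ball c r) < ⊤)
    (m : X → ℝ) (hm : ∀ x, 0 < m x)
    (q : ℝ) (hq : 1 ≤ q)
    (a : X × ℝ → ℂ) (ha : Measurable a)
    (c : X) (r : ℝ) (hr : 0 < r) (hradm : r ≤ 5 * m c)
    (hsupp : ∀ p, p ∉ tentSet m (ball c r) → a p = 0)
    (hsize : ∫⁻ p in tentSet m (ball c r), (‖a p‖₊ : ℝ≥0∞) ^ q ∂(planeMeasure γ) ≤
      γ (ball c r) ^ (1 - q)) :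
    ∫⁻ x, Afun γ m q 1 a x ∂γ ≤ 1 := by
  classical
  haveI : SecondCountableTopology X := secondCountable_of_measure_pos_finite γ hγ
  set B : Set X := ball c r with hBdef
  have hBmeas : MeasurableSet B := measurableSet_ball
  obtain ⟨hG0', hGtop'⟩ := hγ c r hr
  set G : ℝ≥0∞ := γ B with hGdef
  have hG0 : G ≠ 0 := hG0'.ne'
  have hGtop : G ≠ ⊤ := hGtop'.ne
  have hq0 : (0:ℝ) < q := lt_of_lt_of_le one_pos hq
  -- the integrand
  set g : X × ℝ → ℝ≥0∞ := fun p => (‖a p‖₊ : ℝ≥0∞) ^ q / γ (Metric.ball p.1 p.2) with hgdef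
  have hgm : Measurable g := (ha.nnnorm.coe_nnreal_ennreal.pow_const q).div (measurable_measure_ball' γ)
  have ham : Measurable fun p : X × ℝ => (‖a p‖₊ : ℝ≥0∞) ^ q := ha.nnnorm.coe_nnreal_ennreal.pow_const q
  -- support facts
  have hasupp : ∀ p, (‖a p‖₊ : ℝ≥0∞) ^ q ≠ 0 → p ∈ tentSet m (ball c r) := by
    intro p hp
    by_contra h
    rw [hsupp p h] at hp
    simp [ENNReal.zero_rpow_of_pos hq0] at hp
  have hgsupp : ∀ p, g p ≠ 0 → p ∈ tentSet m (ball c r) := by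
    intro p hp
    apply hasupp
    intro h
    rw [hgdef] at hp
    simp only at hp
    rw [h, ENNReal.zero_div] at hp
    exact hp rfl
  have hcancel : ∀ p, g p * γ (Metric.ball p.1 p.2) ≤ (‖a p‖₊ : ℝ≥0∞) ^ q := by
    intro p
    by_cases hp : p ∈ tentSet m (ball c r)
    · have hb := hγ p.1 p.2 hp.1
      rw [hgdef]
      simp only
      rw [ENNReal.div_mul_cancel hb.1.ne' hb.2.ne]
    · have h0 : (‖a p‖₊ : ℝ≥0∞) ^ q = 0 := by
        rw [hsupp p hp]
        simp [ENNReal.zero_rpow_of_pos hq0]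
      have : g p = 0 := by
        rw [hgdef]; simp only
        rw [hsupp p hp]
        simp [ENNReal.zero_rpow_of_pos hq0]
      rw [this, zero_mul]
      exact zero_le
  -- measures
  have hSFt : SFinite tMeasure := by unfold tMeasure; infer_instance
  have hfin : IsFiniteMeasure (γ.restrict B) :=
    ⟨by rwa [Measure.restrict_apply_univ]⟩
  set ρ : Measure (X × ℝ) := (γ.restrict B).prod tMeasure with hρdef
  have hSFρ : SFinite ρ := by infer_instance
  -- the support set T of g
  set T : Set (X × ℝ) := Function.support g with hTdef
  have hTmeas : MeasurableSet T := measurableSet_support hgm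
  have hTsub : T ⊆ B ×ˢ Set.univ := by
    intro p hp
    have htent := hgsupp p hp
    refine ⟨?_, trivial⟩
    exact htent.2.2 (Metric.mem_ball_self htent.1)
  -- jointly measurable kernel
  set W : Set (X × (X × ℝ)) :=
    {z | z.2 ∈ T ∧ 0 < z.2.2 ∧ dist z.1 z.2.1 < z.2.2} with hWdef
  have hWmeas : MeasurableSet W := by
    have h1 : MeasurableSet {z : X × (X × ℝ) | z.2 ∈ T} := measurable_snd hTmeas
    have h2 : IsOpen {z : X × (X × ℝ) | 0 < z.2.2 ∧ dist z.1 z.2.1 < z.2.2} :=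
      (isOpen_lt continuous_const (continuous_snd.snd)).inter
        (isOpen_lt (continuous_fst.dist continuous_snd.fst) continuous_snd.snd)
    have hWeq : W = {z : X × (X × ℝ) | z.2 ∈ T}
        ∩ {z : X × (X × ℝ) | 0 < z.2.2 ∧ dist z.1 z.2.1 < z.2.2} := by
      ext z
      simp only [hWdef, Set.mem_inter_iff, Set.mem_setOf_eq]
    rw [hWeq]
    exact h1.inter h2.measurableSet
  set k : X × (X × ℝ) → ℝ≥0∞ := W.indicator (fun z => g z.2) with hkdef
  have hkm : Measurable k := (hgm.comp measurable_snd).indicator hWmeas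
  -- H x : the nice representation of the cone integral
  set H : X → ℝ≥0∞ := fun x => ∫⁻ p, k (x, p) ∂ρ with hHdef
  have hHm : Measurable H := hkm.lintegral_prod_right'
  -- sets
  have hVmeas : ∀ x : X, MeasurableSet {p : X × ℝ | 0 < p.2 ∧ dist x p.1 < p.2} := by
    intro x
    have : IsOpen {p : X × ℝ | 0 < p.2 ∧ dist x p.1 < p.2} :=
      (isOpen_lt continuous_const continuous_snd).inter
        (isOpen_lt (continuous_const.dist continuous_fst) continuous_snd)
    exact this.measurableSet
  -- identification of Afun with H
  have hAfun : ∀ x : X, Afun γ m q 1 a x = H x ^ (1/q) := by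
    intro x
    have h1 : ∫⁻ p in tCone m 1 x, g p ∂(planeMeasure γ)
        = ∫⁻ p in {p : X × ℝ | 0 < p.2 ∧ dist x p.1 < p.2} ∩ T, g p ∂(planeMeasure γ) := by
      apply setLIntegral_congr_support (planeMeasure γ) hgm
      ext p
      simp only [Set.mem_inter_iff, Set.mem_setOf_eq]
      constructor
      · rintro ⟨hp1, hp2⟩
        have htent := hgsupp p hp2
        exact ⟨⟨⟨hp1.1, by simpa [one_mul] using hp1.2.2⟩, hp2⟩, hp2⟩
      · rintro ⟨⟨hp1, hp2⟩, hp3⟩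
        have htent := hgsupp p hp2
        exact ⟨⟨hp1.1, htent.2.1, by simpa [one_mul] using hp1.2⟩, hp2⟩
    have hs2 : MeasurableSet ({p : X × ℝ | 0 < p.2 ∧ dist x p.1 < p.2} ∩ T) :=
      (hVmeas x).inter hTmeas
    have hsub2 : {p : X × ℝ | 0 < p.2 ∧ dist x p.1 < p.2} ∩ T ⊆ B ×ˢ Set.univ :=
      fun p hp => hTsub hp.2
    have h2 : ∫⁻ p in {p : X × ℝ | 0 < p.2 ∧ dist x p.1 < p.2} ∩ T, g p ∂(planeMeasure γ)
        = ∫⁻ p in {p : X × ℝ | 0 < p.2 ∧ dist x p.1 < p.2} ∩ T, g p ∂ρ := by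
      unfold planeMeasure
      rw [prod_restrict_eq_of_subset γ tMeasure hBmeas hs2 hsub2]
    have h3 : ∫⁻ p in {p : X × ℝ | 0 < p.2 ∧ dist x p.1 < p.2} ∩ T, g p ∂ρ = H x := by
      rw [hHdef]
      simp only
      rw [← lintegral_indicator hs2]
      congr 1
      ext p
      rw [hkdef]
      by_cases hp : p ∈ T ∧ 0 < p.2 ∧ dist x p.1 < p.2
      · have : (x, p) ∈ W := hp
        simp only [Set.indicator]
        rw [if_pos this, if_pos ⟨⟨hp.2.1, hp.2.2⟩, hp.1⟩]
      · have h1 : (x, p) ∉ W := hp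
        have h2 : p ∉ {p : X × ℝ | 0 < p.2 ∧ dist x p.1 < p.2} ∩ T := by
          intro hmem
          exact hp ⟨hmem.2, hmem.1.1, hmem.1.2⟩
        simp only [Set.indicator]
        rw [if_neg h1, if_neg h2]
    unfold Afun
    rw [show (fun p : X × ℝ => (‖a p‖₊ : ℝ≥0∞) ^ q / γ (Metric.ball p.1 p.2)) = g from rfl]
    rw [h1, h2, h3]
  -- Afun vanishes outside B
  have hAsupp : ∀ x ∉ B, Afun γ m q 1 a x = 0 := by
    intro x hx
    rw [hAfun x]
    have hzero : H x = 0 := by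
      rw [hHdef]
      simp only
      have : ∀ p : X × ℝ, k (x, p) = 0 := by
        intro p
        rw [hkdef]
        apply Set.indicator_of_notMem
        intro hmem
        have htent := hgsupp p hmem.1
        apply hx
        apply htent.2.2
        rw [Metric.mem_ball]
        exact hmem.2.2
      simp only [this, lintegral_zero]
    rw [hzero, ENNReal.zero_rpow_of_pos (by positivity)]
  -- reduce to integral over B
  have hred : ∫⁻ x, Afun γ m q 1 a x ∂γ = ∫⁻ x in B, H x ^ (1/q) ∂γ := by
    rw [← lintegral_indicator hBmeas]
    congr 1
    ext x
    by_cases hx : x ∈ B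
    · rw [Set.indicator_of_mem hx, hAfun x]
    · rw [Set.indicator_of_notMem hx, hAsupp x hx]
  -- KEY estimate : ∫⁻ x in B, H x ∂γ ≤ G ^ (1 - q)
  have hKEY : ∫⁻ x in B, H x ∂γ ≤ G ^ (1 - q) := by
    have hswap : ∫⁻ x, H x ∂(γ.restrict B) = ∫⁻ p, ∫⁻ x, k (x, p) ∂(γ.restrict B) ∂ρ := by
      apply lintegral_lintegral_swap
      exact hkm.aemeasurable
    have hinner : ∀ p : X × ℝ, (∫⁻ x, k (x, p) ∂(γ.restrict B)) ≤ (‖a p‖₊ : ℝ≥0∞) ^ q := by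
      intro p
      by_cases hp : p ∈ T ∧ 0 < p.2
      · have heq : (fun x => k (x, p)) = (Metric.ball p.1 p.2).indicator (fun _ => g p) := by
          ext x
          rw [hkdef]
          by_cases hx : dist x p.1 < p.2
          · have h1 : (x, p) ∈ W := ⟨hp.1, hp.2, hx⟩
            have h2 : x ∈ Metric.ball p.1 p.2 := Metric.mem_ball.mpr hx
            simp only [Set.indicator]
            rw [if_pos h1, if_pos h2]
          · have h1 : (x, p) ∉ W := fun hmem => hx hmem.2.2
            have h2 : x ∉ Metric.ball p.1 p.2 := fun hmem => hx (Metric.mem_ball.mp hmem)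
            simp only [Set.indicator]
            rw [if_neg h1, if_neg h2]
        rw [heq, lintegral_indicator_const measurableSet_ball]
        calc g p * (γ.restrict B) (Metric.ball p.1 p.2)
            ≤ g p * γ (Metric.ball p.1 p.2) := by
              gcongr
              exact Measure.restrict_le_self
          _ ≤ (‖a p‖₊ : ℝ≥0∞) ^ q := hcancel p
      · have heq : (fun x => k (x, p)) = fun _ => 0 := by
          ext x
          rw [hkdef]
          apply Set.indicator_of_notMem
          intro hmem
          exact hp ⟨hmem.1, hmem.2.1⟩
        rw [heq]
        simp
    calc ∫⁻ x in B, H x ∂γ = ∫⁻ p, ∫⁻ x, k (x, p) ∂(γ.restrict B) ∂ρ := hswap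
      _ ≤ ∫⁻ p, (‖a p‖₊ : ℝ≥0∞) ^ q ∂ρ := lintegral_mono hinner
      _ ≤ ∫⁻ p, (‖a p‖₊ : ℝ≥0∞) ^ q ∂(planeMeasure γ) := by
          -- ρ-integral = restricted planeMeasure integral ≤ full
          have hT2 : MeasurableSet (Function.support fun p : X × ℝ => (‖a p‖₊ : ℝ≥0∞) ^ q) :=
            measurableSet_support ham
          have hT2sub : (Function.support fun p : X × ℝ => (‖a p‖₊ : ℝ≥0∞) ^ q)
              ⊆ B ×ˢ Set.univ := by
            intro p hp
            have htent := hasupp p hp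
            exact ⟨htent.2.2 (Metric.mem_ball_self htent.1), trivial⟩
          have e1 : ∫⁻ p, (‖a p‖₊ : ℝ≥0∞) ^ q ∂ρ
              = ∫⁻ p in Function.support fun p : X × ℝ => (‖a p‖₊ : ℝ≥0∞) ^ q,
                  (‖a p‖₊ : ℝ≥0∞) ^ q ∂ρ := by
            rw [← lintegral_indicator hT2]
            congr 1
            exact Set.indicator_support.symm
          have e2 : ∫⁻ p in Function.support fun p : X × ℝ => (‖a p‖₊ : ℝ≥0∞) ^ q,
                  (‖a p‖₊ : ℝ≥0∞) ^ q ∂ρ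
              = ∫⁻ p in Function.support fun p : X × ℝ => (‖a p‖₊ : ℝ≥0∞) ^ q,
                  (‖a p‖₊ : ℝ≥0∞) ^ q ∂(planeMeasure γ) := by
            unfold planeMeasure
            rw [prod_restrict_eq_of_subset γ tMeasure hBmeas hT2 hT2sub]
          rw [e1, e2]
          exact lintegral_mono' Measure.restrict_le_self le_rfl
      _ ≤ ∫⁻ p in tentSet m (ball c r), (‖a p‖₊ : ℝ≥0∞) ^ q ∂(planeMeasure γ) :=
          lintegral_le_setLIntegral_support (planeMeasure γ) ham
            (fun p hp => by rw [hsupp p hp]; simp [ENNReal.zero_rpow_of_pos hq0])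
      _ ≤ G ^ (1 - q) := hsize
  rw [hred]
  -- two cases : q = 1 and q > 1
  rcases eq_or_lt_of_le hq with hq1 | hq1
  · -- q = 1
    subst hq1
    simp only [one_div_one, ENNReal.rpow_one]
    calc ∫⁻ x in B, H x ∂γ ≤ G ^ (1 - 1 : ℝ) := hKEY
      _ = 1 := by norm_num
  · -- q > 1 : Hölder
    have hconj : q.HolderConjugate q.conjExponent := Real.HolderConjugate.conjExponent hq1
    have hHolder := ENNReal.lintegral_mul_le_Lp_mul_Lq (γ.restrict B) hconj
      (f := fun x => H x ^ (1/q)) (g := fun _ => 1)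
      ((hHm.pow_const (1/q)).aemeasurable) aemeasurable_const
    simp only [Pi.mul_apply, mul_one, ENNReal.one_rpow, lintegral_one,
      Measure.restrict_apply_univ] at hHolder
    have hpow : ∀ x, (H x ^ (1/q)) ^ q = H x := by
      intro x
      rw [← ENNReal.rpow_mul, one_div_mul_cancel hq0.ne', ENNReal.rpow_one]
    simp only [hpow] at hHolder
    calc ∫⁻ x in B, H x ^ (1/q) ∂γ
        ≤ (∫⁻ x in B, H x ∂γ) ^ (1/q) * G ^ (1 / q.conjExponent) := hHolder
      _ ≤ (G ^ (1 - q)) ^ (1/q) * G ^ (1 / q.conjExponent) := by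
          gcongr
      _ = 1 := by
          rw [← ENNReal.rpow_mul, ← ENNReal.rpow_add _ _ hG0 hGtop]
          have hc : q.conjExponent = q / (q - 1) := rfl
          have : (1 - q) * (1/q) + 1 / q.conjExponent = 0 := by
            rw [hc]
            field_simp
            ring
          rw [this, ENNReal.rpow_zero]
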